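/- Let m ∈ ℕ_{>0} and T ∈ ℕ_{>0} with m ≤ T. For every base b in the integer interval (⌊(T/m)^{1/(x+1)}⌋, ⌊(T/m)^{1/x}⌋] with x ≥ 1, the maximal exponent k with m·b^k ≤ T equals x. Hence the exponent function b ↦ max{k : m·b^k ≤ T} is constant on each such interval. -/
import Mathlib


/-- For `m ≤ T` and `x ≥ 1`, every integer base `b ≥ 2` in the interval
`(⌊(T/m)^{1/(x+1)}⌋, ⌊(T/m)^{1/x}⌋]` has maximal admissible exponent exactly `x`:
`m·b^x ≤ T` and `m·b^{x+1} > T`. Hence the exponent function is constant on each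
such interval. -/
theorem exponent_constant_on_interval (m T b x : ℕ)
    (hm : 0 < m) (hmT : m ≤ T) (hx : 1 ≤ x) (hb : 2 ≤ b)
    (hlo : ⌊((T : ℝ) / m) ^ (((x : ℝ) + 1)⁻¹)⌋₊ < b)
    (hhi : b ≤ ⌊((T : ℝ) / m) ^ ((x : ℝ)⁻¹)⌋₊) :
    m * b ^ x ≤ T ∧ T < m * b ^ (x + 1) := by
  have hm' : (0 : ℝ) < m := by exact_mod_cast hm
  have hr0 : (0 : ℝ) ≤ (T : ℝ) / m := by positivity
  constructor
  · -- from hhi : b ≤ floor (r ^ (1/x))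
    have h1 : (b : ℝ) ≤ ((T : ℝ) / m) ^ ((x : ℝ)⁻¹) := by
      calc (b : ℝ) ≤ (⌊((T : ℝ) / m) ^ ((x : ℝ)⁻¹)⌋₊ : ℝ) := by exact_mod_cast hhi
        _ ≤ _ := Nat.floor_le (by positivity)
    have h2 : ((b : ℝ)) ^ x ≤ (((T : ℝ) / m) ^ ((x : ℝ)⁻¹)) ^ x :=
      pow_le_pow_left₀ (by positivity) h1 x
    rw [Real.rpow_inv_natCast_pow hr0 (by omega)] at h2
    have h3 : (m : ℝ) * (b : ℝ) ^ x ≤ T := by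
      rw [div_eq_mul_inv] at h2
      calc (m : ℝ) * (b : ℝ) ^ x ≤ m * ((T : ℝ) * (m : ℝ)⁻¹) :=
        mul_le_mul_of_nonneg_left h2 hm'.le
        _ = T := by field_simp
    exact_mod_cast h3
  · have h1 : ((T : ℝ) / m) ^ (((x : ℝ) + 1)⁻¹) < b := by
      exact (Nat.floor_lt (by positivity)).mp hlo
    have h2 : (((T : ℝ) / m) ^ (((x : ℝ) + 1)⁻¹)) ^ (x + 1) < ((b : ℝ)) ^ (x + 1) :=
      pow_lt_pow_left₀ h1 (by positivity) (by omega)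
    have hcast : ((x : ℝ) + 1)⁻¹ = (((x + 1 : ℕ) : ℝ))⁻¹ := by push_cast; ring
    rw [hcast, Real.rpow_inv_natCast_pow hr0 (by omega)] at h2
    have h3 : (T : ℝ) < m * (b : ℝ) ^ (x + 1) := by
      rw [div_lt_iff₀ hm'] at h2
      linarith [h2]
    exact_mod_cast h3
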